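/- Suppose λ ∈ ℝ admits an eigenfunction ψ : ℝ × ℝ^N → ℝ^K which is continuous, continuously differentiable in t, T-periodic in t, p_l-periodic in each spatial variable x_l, nonnegative and not identically zero, and satisfies −∂_t ψ(t,x) + ∫_{ℝ^N} κ(y−x)[ψ(t,y) − ψ(t,x)] dy + A(t,x) ψ(t,x) = λ ψ(t,x) for all (t,x) ∈ ℝ × ℝ^N. Then λ > max_{x ∈ ℝ^N} h₃(x), where h₃(x) = −1 + λ₃(x). -/

import Mathlib

open MeasureTheory Set

/- Auxiliary lemma: a continuous nonnegative compactly supported function that is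
positive somewhere has positive integral. -/
lemma stmt9_pos_int {N : ℕ} (f : EuclideanSpace ℝ (Fin N) → ℝ) (hc : Continuous f)
    (hs : HasCompactSupport f) (hnn : ∀ y, 0 ≤ f y) {y₀} (h0 : 0 < f y₀) :
    0 < ∫ y, f y := by
  rw [integral_pos_iff_support_of_nonneg_ae (Filter.Eventually.of_forall hnn)
    (hc.integrable_of_hasCompactSupport hs)]
  have hop : IsOpen {y | 0 < f y} := isOpen_lt continuous_const hc
  have hsub : {y | 0 < f y} ⊆ Function.support f := fun y hy => ne_of_gt hy
  exact lt_of_lt_of_le (hop.measure_pos volume ⟨y₀, h0⟩) (measure_mono hsub)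

/- Auxiliary lemma: continuity / compact support of the kernel times a function. -/
lemma stmt9_kres {N : ℕ} (κ : EuclideanSpace ℝ (Fin N) → ℝ) (hc : Continuous κ)
    (hs : HasCompactSupport κ) (x : EuclideanSpace ℝ (Fin N))
    (g : EuclideanSpace ℝ (Fin N) → ℝ) (hg : Continuous g) :
    HasCompactSupport (fun y => κ (y - x) * g y) ∧ Continuous (fun y => κ (y - x) * g y) := by
  have h1 : HasCompactSupport (fun y => κ (y - x)) :=
    hs.comp_homeomorph (Homeomorph.subRight x)
  exact ⟨h1.mul_right, (hc.comp (continuous_id.sub continuous_const)).mul hg⟩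

/- Auxiliary lemma: a continuous periodic function is bounded. -/
lemma stmt9_per_bdd (h : ℝ → ℝ) (T : ℝ) (hT : 0 < T) (hc : Continuous h)
    (hp : Function.Periodic h T) : ∃ C, ∀ t, |h t| ≤ C := by
  obtain ⟨t₁, -, ht₁⟩ := isCompact_Icc.exists_isMaxOn (⟨0, by simp [hT.le]⟩ :
    (Icc (0:ℝ) T).Nonempty) ((continuous_abs.comp hc).continuousOn)
  refine ⟨|h t₁|, fun t => ?_⟩
  obtain ⟨s, hs, hst⟩ := hp.exists_mem_Ico₀ hT t
  rw [hst]
  exact ht₁ ⟨hs.1, hs.2.le⟩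

/- Auxiliary Gronwall-type lemma: a nonnegative periodic function with
`u' ≥ -C u` that vanishes somewhere vanishes identically. -/
lemma stmt9_vanish_all (u : ℝ → ℝ) (hu : Differentiable ℝ u) (hnn : ∀ t, 0 ≤ u t)
    (T : ℝ) (hT : 0 < T) (hp : Function.Periodic u T)
    (C : ℝ) (hd : ∀ t, -C * u t ≤ deriv u t) {t₀ : ℝ} (h0 : u t₀ = 0) :
    ∀ t, u t = 0 := by
  have back : ∀ t ≤ t₀, u t = 0 := by
    intro t ht
    set g : ℝ → ℝ := fun s => u s * Real.exp (C * s) with hg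
    have hgd : ∀ s, HasDerivAt g (deriv u s * Real.exp (C * s) + u s * (Real.exp (C * s) * C)) s := by
      intro s
      have he : HasDerivAt (fun r => Real.exp (C * r)) (Real.exp (C * s) * C) s := by
        have h := (Real.hasDerivAt_exp (C * s)).comp s ((hasDerivAt_id s).const_mul C)
        rw [mul_one] at h
        exact h
      exact ((hu s).hasDerivAt).mul he
    have hmono : Monotone g := by
      apply monotone_of_deriv_nonneg (fun s => ((hgd s).differentiableAt))
      intro s
      rw [(hgd s).deriv]
      have := hd s
      nlinarith [Real.exp_pos (C * s), hnn s]
    have hle : g t ≤ g t₀ := hmono ht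
    have h1 : g t₀ = 0 := by simp [hg, h0]
    have h2 : 0 ≤ g t := mul_nonneg (hnn t) (Real.exp_pos _).le
    have hz : g t = 0 := le_antisymm (h1 ▸ hle) h2
    rcases mul_eq_zero.mp hz with h | h
    · exact h
    · exact absurd h (Real.exp_pos _).ne'
  intro t
  obtain ⟨n, hn⟩ := exists_nat_ge ((t - t₀) / T)
  have hle : t - n * T ≤ t₀ := by
    rw [div_le_iff₀ hT] at hn; linarith
  have := back _ hle
  rwa [hp.sub_nat_mul_eq n] at this

/-- If `λ` admits a nonnegative, not identically zero,
time- and space-periodic eigenfunction for the periodic nonlocal dispersal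
problem on `ℝ^N`, then `λ > max_{x ∈ ℝ^N} h₃(x)` where `h₃(x) = −1 + λ₃(x)`
and `λ₃(x)` is the principal eigenvalue of `−φ′ + A(t,x)φ = λ₃(x)φ`,
`φ(t+T) = φ(t)`. -/
theorem stmt9
    (N K : ℕ) (hN : 1 ≤ N) (hK : 2 ≤ K) (T : ℝ) (hT : 0 < T)
    (p : Fin N → ℝ) (hp : ∀ l, 0 < p l)
    (κ : EuclideanSpace ℝ (Fin N) → ℝ)
    (hκC : ContDiff ℝ 1 κ) (hκsupp : HasCompactSupport κ)
    (hκnn : ∀ z, 0 ≤ κ z) (hκ0 : 0 < κ 0)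
    (hκint : ∫ z, κ z = 1)
    (A : ℝ → EuclideanSpace ℝ (Fin N) → Matrix (Fin K) (Fin K) ℝ)
    (hAcont : ∀ k j, Continuous (fun q : ℝ × EuclideanSpace ℝ (Fin N) => A q.1 q.2 k j))
    (hAper : ∀ t x, A (t + T) x = A t x)
    (hAsper : ∀ t x l, A t (x + EuclideanSpace.single l (p l)) = A t x)
    (hAcoop : ∀ t x, ∀ k j : Fin K, k ≠ j → 0 ≤ A t x k j)
    (hAirr : ∀ S : Set (Fin K), S.Nonempty → Sᶜ.Nonempty → ∀ t x,
      ∃ k ∈ S, ∃ j ∈ Sᶜ, A t x k j ≠ 0)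
    -- `λ₃(x)`: the principal eigenvalue of `−φ′ + A(t,x)φ = λφ`, `φ(t+T) = φ(t)`
    (lam3 : EuclideanSpace ℝ (Fin N) → ℝ)
    (hlam3 : ∀ x, ∃ φ : ℝ → Fin K → ℝ, ContDiff ℝ 1 φ ∧
      (∀ t, φ (t + T) = φ t) ∧ (∀ t k, 0 < φ t k) ∧
      ∀ t k, -(deriv φ t k) + ∑ j, A t x k j * φ t j = lam3 x * φ t k)
    (hlam3cont : Continuous lam3)
    -- the eigenpair `(λ, ψ)`
    (lam : ℝ) (ψ : ℝ → EuclideanSpace ℝ (Fin N) → Fin K → ℝ)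
    (hψcont : Continuous (fun q : ℝ × EuclideanSpace ℝ (Fin N) => ψ q.1 q.2))
    (hψC1 : ∀ x k, ContDiff ℝ 1 fun t => ψ t x k)
    (hψper : ∀ t x, ψ (t + T) x = ψ t x)
    (hψsper : ∀ t x l, ψ t (x + EuclideanSpace.single l (p l)) = ψ t x)
    (hψnn : ∀ t x k, 0 ≤ ψ t x k)
    (hψne : ∃ t x, ψ t x ≠ 0)
    (hψeq : ∀ t x k,
      -(deriv (fun r => ψ r x k) t) + (∫ y, κ (y - x) * (ψ t y k - ψ t x k))
        + ∑ j, A t x k j * ψ t x j = lam * ψ t x k) :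
    ∀ x, -1 + lam3 x < lam := by
  -- continuity facts
  have hψc2 : ∀ k : Fin K, Continuous (fun q : ℝ × EuclideanSpace ℝ (Fin N) => ψ q.1 q.2 k) :=
    fun k => (continuous_apply k).comp hψcont
  have hψty : ∀ (t : ℝ) (k : Fin K), Continuous fun y => ψ t y k :=
    fun t k => (hψc2 k).comp (Continuous.prodMk_right t)
  have hψtx : ∀ (x : EuclideanSpace ℝ (Fin N)) (k : Fin K), Continuous fun t => ψ t x k :=
    fun x k => (hψC1 x k).continuous
  -- integral facts
  have hκcont := hκC.continuous
  have hκxC : ∀ x : EuclideanSpace ℝ (Fin N), Continuous fun y => κ (y - x) :=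
    fun x => hκcont.comp (continuous_id.sub continuous_const)
  have hκxS : ∀ x : EuclideanSpace ℝ (Fin N), HasCompactSupport fun y => κ (y - x) :=
    fun x => hκsupp.comp_homeomorph (Homeomorph.subRight x)
  have hBnn : ∀ t x k, 0 ≤ ∫ y, κ (y - x) * ψ t y k :=
    fun t x k => integral_nonneg (fun y => mul_nonneg (hκnn _) (hψnn _ _ _))
  have hsplit : ∀ (t : ℝ) (x : EuclideanSpace ℝ (Fin N)) (k : Fin K) (cc : ℝ),
      (∫ y, κ (y - x) * (ψ t y k - cc)) = (∫ y, κ (y - x) * ψ t y k) - cc := by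
    intro t x k cc
    obtain ⟨hS, hC⟩ := stmt9_kres κ hκcont hκsupp x (fun y => ψ t y k) (hψty t k)
    have hint1 : Integrable (fun y => κ (y - x) * ψ t y k) :=
      hC.integrable_of_hasCompactSupport hS
    have hint2 : Integrable (fun y => κ (y - x) * cc) :=
      ((hκxC x).integrable_of_hasCompactSupport (hκxS x)).mul_const cc
    have heq : (fun y => κ (y - x) * (ψ t y k - cc))
        = fun y => κ (y - x) * ψ t y k - κ (y - x) * cc := by funext y; ring
    rw [heq, integral_sub hint1 hint2, integral_mul_const,
      integral_sub_right_eq_self κ x, hκint, one_mul]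
  -- Step (a): temporal dichotomy for each component at each point
  have hdich : ∀ (x : EuclideanSpace ℝ (Fin N)) (k : Fin K) (t₁ : ℝ),
      ψ t₁ x k = 0 → ∀ t, ψ t x k = 0 := by
    intro x k t₁ h1
    obtain ⟨C₀, hC₀⟩ := stmt9_per_bdd (fun t => A t x k k) T hT
      ((hAcont k k).comp (continuous_id.prodMk continuous_const))
      (fun t => by simp [hAper])
    set u : ℝ → ℝ := fun t => ψ t x k with hu
    have hud : Differentiable ℝ u := (hψC1 x k).differentiable one_ne_zero
    refine stmt9_vanish_all u hud (fun t => hψnn t x k) T hT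
      (fun t => congrFun (hψper t x) k) (C₀ + |lam| + 1) (fun t => ?_) h1
    have heq := hψeq t x k
    have hI : (∫ y, κ (y - x) * (ψ t y k - ψ t x k))
        = (∫ y, κ (y - x) * ψ t y k) - ψ t x k := hsplit t x k _
    have hsum : A t x k k * ψ t x k ≤ ∑ j, A t x k j * ψ t x j := by
      rw [← Finset.add_sum_erase Finset.univ _ (Finset.mem_univ k)]
      have : 0 ≤ ∑ j ∈ Finset.univ.erase k, A t x k j * ψ t x j :=
        Finset.sum_nonneg fun j hj =>
          mul_nonneg (hAcoop t x k j (Ne.symm (Finset.ne_of_mem_erase hj))) (hψnn t x j)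
      linarith
    have hderiv : deriv u t = (∫ y, κ (y - x) * (ψ t y k - ψ t x k))
        + (∑ j, A t x k j * ψ t x j) - lam * ψ t x k := by
      have : deriv u t = deriv (fun r => ψ r x k) t := rfl
      rw [this]; linarith [heq]
    have hABs := hC₀ t
    have h1' := abs_le.mp hABs
    have h2' := abs_le.mp (le_refl |lam|)
    have hun : 0 ≤ u t := hψnn t x k
    have hB := hBnn t x k
    rw [hderiv, hI]
    have : -|lam| ≤ lam := neg_abs_le lam
    nlinarith [mul_le_mul_of_nonneg_right h1'.1 hun, mul_le_mul_of_nonneg_right this hun]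
  -- Step (b): positivity propagates to all components and times at a fixed point
  have hposx : ∀ x : EuclideanSpace ℝ (Fin N), (∃ t k, 0 < ψ t x k) → ∀ t k, 0 < ψ t x k := by
    intro x ⟨t₁, k₁, h₁⟩
    have hdk : ∀ k : Fin K, (∀ t, ψ t x k = 0) ∨ (∀ t, 0 < ψ t x k) := by
      intro k
      by_cases h : ∃ t, ψ t x k = 0
      · obtain ⟨t₂, ht₂⟩ := h
        exact Or.inl (hdich x k t₂ ht₂)
      · push_neg at h
        exact Or.inr fun t => lt_of_le_of_ne (hψnn t x k) (Ne.symm (h t))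
    by_contra hcon
    push_neg at hcon
    obtain ⟨t₂, k₂, hk₂⟩ := hcon
    have hS : (∀ t, ψ t x k₂ = 0) := by
      rcases hdk k₂ with h | h
      · exact h
      · exact absurd (h t₂) (not_lt.mpr hk₂)
    set S : Set (Fin K) := {k | ∀ t, ψ t x k = 0} with hSdef
    have hSne : S.Nonempty := ⟨k₂, hS⟩
    have hScne : Sᶜ.Nonempty := by
      refine ⟨k₁, fun hmem => ?_⟩
      exact absurd (hmem t₁) (ne_of_gt h₁)
    obtain ⟨k, hkS, j, hjS, hAkj⟩ := hAirr S hSne hScne 0 x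
    have hkj : k ≠ j := fun h => hjS (h ▸ hkS)
    have hApos : 0 < A 0 x k j := lt_of_le_of_ne (hAcoop 0 x k j hkj) (Ne.symm hAkj)
    have hjpos : 0 < ψ 0 x j := by
      rcases hdk j with h | h
      · exact absurd h hjS
      · exact h 0
    have heq := hψeq 0 x k
    have hzero : (fun r => ψ r x k) = fun _ => (0:ℝ) := funext fun r => hkS r
    rw [hzero] at heq
    simp only [deriv_const] at heq
    have hk0 : ψ 0 x k = 0 := hkS 0
    rw [hk0] at heq
    have hBpos : 0 ≤ ∫ y, κ (y - x) * (ψ 0 y k - 0) := by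
      simp only [sub_zero]; exact hBnn 0 x k
    have hsum : 0 < ∑ j', A 0 x k j' * ψ 0 x j' := by
      apply Finset.sum_pos'
      · intro j' _
        by_cases hj' : j' = k
        · subst hj'; rw [hk0]; simp
        · exact mul_nonneg (hAcoop 0 x k j' fun h => hj' h.symm) (hψnn 0 x j')
      · exact ⟨j, Finset.mem_univ j, mul_pos hApos hjpos⟩
    rw [mul_zero] at heq
    linarith
  -- Step (c): spatial propagation; ψ is everywhere positive
  have hglob : ∀ (x : EuclideanSpace ℝ (Fin N)) (t : ℝ) (k : Fin K), 0 < ψ t x k := by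
    set Z : Set (EuclideanSpace ℝ (Fin N)) := {x | ∀ t k, ψ t x k = 0} with hZdef
    have hZclosed : IsClosed Z := by
      have : Z = ⋂ (t : ℝ), ⋂ (k : Fin K), {x | ψ t x k = 0} := by
        ext x; simp [hZdef, Set.mem_iInter]
      rw [this]
      exact isClosed_iInter fun t => isClosed_iInter fun k =>
        isClosed_eq ((hψc2 k).comp (Continuous.prodMk_right t)) continuous_const
    have hZopen : IsOpen Z := by
      rw [Metric.isOpen_iff]
      intro x₀ hx₀
      have hop : IsOpen {z | 0 < κ z} := isOpen_lt continuous_const hκcont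
      obtain ⟨ε, hε, hball⟩ := Metric.isOpen_iff.mp hop 0 hκ0
      refine ⟨ε, hε, fun y hy => ?_⟩
      intro t k
      -- the integral vanishes at x₀
      have hzero : (fun r => ψ r x₀ k) = fun _ => (0:ℝ) := funext fun r => hx₀ r k
      have heq := hψeq t x₀ k
      rw [hzero] at heq
      simp only [deriv_const] at heq
      have hx₀tk : ψ t x₀ k = 0 := hx₀ t k
      rw [hx₀tk] at heq
      have hsum0 : (∑ j, A t x₀ k j * ψ t x₀ j) = 0 := by
        apply Finset.sum_eq_zero; intro j _; rw [hx₀ t j, mul_zero]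
      rw [hsum0, mul_zero] at heq
      have hI0 : (∫ y', κ (y' - x₀) * (ψ t y' k - 0)) = 0 := by linarith
      simp only [sub_zero] at hI0
      -- if ψ t y k > 0, the integral would be positive
      by_contra hne
      have hypos : 0 < ψ t y k := lt_of_le_of_ne (hψnn t y k) (Ne.symm hne)
      have hκy : 0 < κ (y - x₀) := by
        apply hball
        rw [Metric.mem_ball, dist_eq_norm, sub_zero]
        rw [Metric.mem_ball, dist_eq_norm] at hy
        exact hy
      obtain ⟨hS, hC⟩ := stmt9_kres κ hκcont hκsupp x₀ (fun y' => ψ t y' k) (hψty t k)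
      have := stmt9_pos_int _ hC hS (fun y' => mul_nonneg (hκnn _) (hψnn _ _ _))
        (mul_pos hκy hypos)
      rw [hI0] at this
      exact lt_irrefl 0 this
    have hZne : Z ≠ univ := by
      obtain ⟨t, x, hx⟩ := hψne
      intro h
      apply hx
      funext k
      exact (h ▸ (Set.mem_univ x) : x ∈ Z) t k
    have hZempty : Z = ∅ := by
      have hclop : IsClopen Z := ⟨hZclosed, hZopen⟩
      rcases isClopen_iff.mp hclop with h | h
      · exact h
      · exact absurd h hZne
    intro x t k
    have hxZ : x ∉ Z := hZempty ▸ Set.notMem_empty x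
    have : ∃ t' k', 0 < ψ t' x k' := by
      by_contra hcon
      push_neg at hcon
      exact hxZ fun t' k' => le_antisymm (hcon t' k') (hψnn t' x k')
    exact hposx x this t k
  -- Final comparison at a fixed x
  intro x
  obtain ⟨φ, hφC, hφper, hφpos, hφeq⟩ := hlam3 x
  have hφdk : ∀ k : Fin K, Differentiable ℝ (fun t => φ t k) := fun k t =>
    ((hasDerivAt_pi.mp ((hφC.differentiable one_ne_zero t).hasDerivAt)) k).differentiableAt
  have hderφ : ∀ (t : ℝ) (k : Fin K), deriv (fun s => φ s k) t = deriv φ t k :=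
    fun t k => ((hasDerivAt_pi.mp ((hφC.differentiable one_ne_zero t).hasDerivAt)) k).deriv
  have hφck : ∀ k : Fin K, Continuous (fun t => φ t k) :=
    fun k => (continuous_apply k).comp hφC.continuous
  set r : Fin K → ℝ → ℝ := fun k t => ψ t x k / φ t k with hr
  have hrc : ∀ k, Continuous (r k) := fun k =>
    (hψtx x k).div (hφck k) (fun t => (hφpos t k).ne')
  have hrper : ∀ k, Function.Periodic (r k) T := by
    intro k t
    simp only [hr, hψper t x, hφper t]
  have hmin : ∀ k : Fin K, ∃ tk ∈ Icc (0:ℝ) T, IsMinOn (r k) (Icc 0 T) tk := by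
    intro k
    exact isCompact_Icc.exists_isMinOn ⟨0, by simp [hT.le]⟩ (hrc k).continuousOn
  choose tk htkm htkmin using hmin
  have hKne : (Finset.univ : Finset (Fin K)).Nonempty := by
    refine ⟨⟨0, by omega⟩, Finset.mem_univ _⟩
  obtain ⟨k₀, -, hk₀⟩ := Finset.exists_min_image Finset.univ (fun k => r k (tk k)) hKne
  set t₀ : ℝ := tk k₀ with ht₀
  set c : ℝ := r k₀ t₀ with hc
  have hc_le : ∀ (t : ℝ) (k : Fin K), c ≤ r k t := by
    intro t k
    obtain ⟨s, hs, hst⟩ := (hrper k).exists_mem_Ico₀ hT t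
    rw [hst]
    calc c ≤ r k (tk k) := hk₀ k (Finset.mem_univ k)
    _ ≤ r k s := htkmin k ⟨hs.1, hs.2.le⟩
  have hcφ : ∀ (t : ℝ) (k : Fin K), c * φ t k ≤ ψ t x k := by
    intro t k
    have h := hc_le t k
    rw [hr, le_div_iff₀ (hφpos t k)] at h
    linarith
  have hcpos : 0 < c := div_pos (hglob x t₀ k₀) (hφpos t₀ k₀)
  have hu0 : ψ t₀ x k₀ = c * φ t₀ k₀ := by
    rw [hc]
    show ψ t₀ x k₀ = ψ t₀ x k₀ / φ t₀ k₀ * φ t₀ k₀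
    exact (div_mul_cancel₀ _ (hφpos t₀ k₀).ne').symm
  -- w has a global minimum 0 at t₀
  set w : ℝ → ℝ := fun t => ψ t x k₀ - c * φ t k₀ with hw
  have hw0 : w t₀ = 0 := by rw [hw]; simp [hu0]
  have hwnn : ∀ t, 0 ≤ w t := fun t => sub_nonneg.mpr (hcφ t k₀)
  have hwmin : IsLocalMin w t₀ := Filter.Eventually.of_forall fun t => hw0 ▸ hwnn t
  have hψdiff : Differentiable ℝ (fun t => ψ t x k₀) := (hψC1 x k₀).differentiable one_ne_zero
  have hwderiv : deriv w t₀ = deriv (fun t => ψ t x k₀) t₀ - c * deriv (fun t => φ t k₀) t₀ := by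
    rw [hw]
    rw [deriv_fun_sub (hψdiff t₀) (((hφdk k₀) t₀).const_mul c), deriv_const_mul c ((hφdk k₀) t₀)]
  have hwd0 : deriv w t₀ = 0 := hwmin.deriv_eq_zero
  have hdu : deriv (fun t => ψ t x k₀) t₀ = c * deriv φ t₀ k₀ := by
    rw [← hderφ t₀ k₀]
    linarith [hwderiv, hwd0]
  -- equations
  have E1 := hψeq t₀ x k₀
  have E2 := hφeq t₀ k₀
  have hI : (∫ y, κ (y - x) * (ψ t₀ y k₀ - ψ t₀ x k₀))
      = (∫ y, κ (y - x) * ψ t₀ y k₀) - ψ t₀ x k₀ := hsplit t₀ x k₀ _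
  -- B > 0
  have hBpos : 0 < ∫ y, κ (y - x) * ψ t₀ y k₀ := by
    obtain ⟨hS, hC⟩ := stmt9_kres κ hκcont hκsupp x (fun y => ψ t₀ y k₀) (hψty t₀ k₀)
    refine stmt9_pos_int _ hC hS (fun y => mul_nonneg (hκnn _) (hψnn _ _ _)) (y₀ := x) ?_
    rw [sub_self]
    exact mul_pos hκ0 (hglob x t₀ k₀)
  -- sum comparison
  have hsums : c * (∑ j, A t₀ x k₀ j * φ t₀ j) ≤ ∑ j, A t₀ x k₀ j * ψ t₀ x j := by
    rw [Finset.mul_sum]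
    apply Finset.sum_le_sum
    intro j _
    by_cases hj : j = k₀
    · subst hj
      rw [hu0]; ring_nf; exact le_refl _
    · have h1 : 0 ≤ A t₀ x k₀ j := hAcoop t₀ x k₀ j fun h => hj h.symm
      have h2 : c * φ t₀ j ≤ ψ t₀ x j := hcφ t₀ j
      calc c * (A t₀ x k₀ j * φ t₀ j) = A t₀ x k₀ j * (c * φ t₀ j) := by ring
      _ ≤ A t₀ x k₀ j * ψ t₀ x j := mul_le_mul_of_nonneg_left h2 h1
  -- final computation
  have hupos : 0 < ψ t₀ x k₀ := hglob x t₀ k₀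
  have hE2c : -(c * deriv φ t₀ k₀) + c * (∑ j, A t₀ x k₀ j * φ t₀ j)
      = lam3 x * (c * φ t₀ k₀) := by
    linear_combination c * E2
  rw [hdu, hI] at E1
  rw [← hu0] at hE2c
  by_contra hcon
  push_neg at hcon
  have h1 : (lam - lam3 x + 1) * ψ t₀ x k₀ ≤ 0 :=
    mul_nonpos_of_nonpos_of_nonneg (by linarith) hupos.le
  nlinarith [E1, hE2c, hsums, hBpos, h1]
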